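/- arXiv:1405.3681 — 3 statements merged into one kernel-verified Lean document; each statement's English description precedes it below -/
import Mathlib

section
/- In a symmetric monoidal category C with discarding morphisms d_A : A → I (d_I = id_I), suppose (!) holds: the only morphism I → I is id_I. If every morphism f : A → B, viewed as a two-party process with the second party's input and output trivial (i.e. F = f ⊗ id_I up to unitors), is non-signalling, then the theory is terminal: d_B ∘ f = d_A for all f : A → B. -/
open CategoryTheory MonoidalCategory

/-- Non-signalling of a bipartite process `F : A ⊗ A' ⟶ Cc ⊗ Cc'` with respect to a
family of discarding effects `d`: discarding one party's output makes the result factor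
through discarding that party's input. -/
def NonSignalling {C : Type*} [Category C] [MonoidalCategory C] [SymmetricCategory C]
    (d : ∀ A : C, A ⟶ 𝟙_ C) {A A' Cc Cc' : C} (F : A ⊗ A' ⟶ Cc ⊗ Cc') : Prop :=
  (∃ h : A' ⟶ Cc',
      F ≫ (d Cc ⊗ₘ 𝟙 Cc') ≫ (λ_ Cc').hom = (d A ⊗ₘ 𝟙 A') ≫ (λ_ A').hom ≫ h) ∧
  (∃ h' : A ⟶ Cc,
      F ≫ (𝟙 Cc ⊗ₘ d Cc') ≫ (ρ_ Cc).hom = (𝟙 A ⊗ₘ d A') ≫ (ρ_ A).hom ≫ h')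

/-- Theorem 2: assuming (!) (the only scalar is the identity on the unit), if every
process `f : A ⟶ B`, viewed as a two-party process with the second party trivial
(`f ⊗ 𝟙 (𝟙_ C)`), is non-signalling, then the theory is terminal: `f ≫ d B = d A`. -/
theorem nonsignalling_implies_terminality
    {C : Type*} [Category C] [MonoidalCategory C] [SymmetricCategory C]
    (d : ∀ A : C, A ⟶ 𝟙_ C) (hdI : d (𝟙_ C) = 𝟙 (𝟙_ C))
    (bang : ∀ e : 𝟙_ C ⟶ 𝟙_ C, e = 𝟙 (𝟙_ C))
    (ns : ∀ (A B : C) (f : A ⟶ B), NonSignalling d (f ⊗ₘ 𝟙 (𝟙_ C))) :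
    ∀ (A B : C) (f : A ⟶ B), f ≫ d B = d A := by
  intro A B f
  obtain ⟨⟨h, hh⟩, -⟩ := ns A B f
  rw [bang h, Category.comp_id] at hh
  rw [unitors_equal] at hh
  have hh' : ((f ≫ d B) ⊗ₘ 𝟙 (𝟙_ C)) ≫ (ρ_ (𝟙_ C)).hom
      = (d A ⊗ₘ 𝟙 (𝟙_ C)) ≫ (ρ_ (𝟙_ C)).hom := by
    simpa [← MonoidalCategory.tensorHom_comp_tensorHom] using hh
  rw [MonoidalCategory.tensorHom_id, MonoidalCategory.tensorHom_id,
    rightUnitor_naturality, rightUnitor_naturality] at hh'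
  exact (cancel_epi (ρ_ A).hom).mp hh'
end

section
/- Let Φ : M_{m}(ℂ) ⊗ M_{m'}(ℂ) → M_{n}(ℂ) ⊗ M_{n'}(ℂ) be a linear map of the form Φ = (Tr_{hidden} ⊗ id) ∘ (Φ_A ⊗ Φ_B) ∘ Φ_0 where Φ_0, Φ_A, Φ_B are trace-preserving linear maps, Φ_A acts only on Alice's factor (tensored with her share of the hidden system), Φ_B only on Bob's, and Tr_hidden discards the remaining hidden outputs. Then Φ is non-signalling: Tr_{n'}(Φ(ρ)) depends only on Tr_{m'}(ρ) — i.e. there exists a linear map h : M_m(ℂ) → M_n(ℂ) with Tr_{B-out} ∘ Φ = h ∘ Tr_{B-in}, and symmetrically for the other party. -/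
open scoped BigOperators

/-- Partial trace over the second tensor factor. -/
noncomputable def ptrace₂ {m m' : ℕ} (ρ : Matrix (Fin m × Fin m') (Fin m × Fin m') ℂ) :
    Matrix (Fin m) (Fin m) ℂ :=
  Matrix.of fun i j => ∑ s : Fin m', ρ (i, s) (j, s)

/-- Partial trace over the first tensor factor. -/
noncomputable def ptrace₁ {m m' : ℕ} (ρ : Matrix (Fin m × Fin m') (Fin m × Fin m') ℂ) :
    Matrix (Fin m') (Fin m') ℂ :=
  Matrix.of fun i j => ∑ s : Fin m, ρ (s, i) (s, j)

lemma trace_std {ι : Type*} [Fintype ι] [DecidableEq ι] (p q : ι) :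
    (Matrix.single p q (1:ℂ)).trace = if p = q then 1 else 0 := by
  classical
  by_cases h : p = q
  · subst h; simp [Matrix.trace, Matrix.diag, Matrix.single]
  · rw [if_neg h, Matrix.trace, Finset.sum_eq_zero]
    intro i _
    exact Matrix.single_apply_of_ne p q 1 i i (fun hc => h (hc.1.trans hc.2.symm))

set_option maxHeartbeats 3000000

/-- Quantum instance of Theorem 1: a channel `Φ` of diamond form — a shared (hidden)
preparation `σ` of unit trace, local trace-preserving maps `ΦA` (acting on Alice's input
together with her share of the hidden system) and `ΦB` (likewise for Bob), followed by
tracing out the remaining hidden outputs — is non-signalling: the partial trace of the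
output over one party's system depends only on the partial trace of the input over that
party's system, via a linear map. -/
theorem quantum_diamond_nonsignalling
    (m m' n n' k k' k₂ k₂' : ℕ)
    (σ : Matrix (Fin k × Fin k') (Fin k × Fin k') ℂ) (hσ : σ.trace = 1)
    (ΦA : Matrix (Fin k × Fin m) (Fin k × Fin m) ℂ →ₗ[ℂ]
          Matrix (Fin n × Fin k₂) (Fin n × Fin k₂) ℂ)
    (ΦB : Matrix (Fin k' × Fin m') (Fin k' × Fin m') ℂ →ₗ[ℂ]
          Matrix (Fin n' × Fin k₂') (Fin n' × Fin k₂') ℂ)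
    (hA : ∀ X, (ΦA X).trace = X.trace)
    (hB : ∀ X, (ΦB X).trace = X.trace)
    (Φ : Matrix (Fin m × Fin m') (Fin m × Fin m') ℂ →ₗ[ℂ]
         Matrix (Fin n × Fin n') (Fin n × Fin n') ℂ)
    (hΦ : ∀ ρ b b' c c', Φ ρ (b, b') (c, c') =
      ∑ x₂ : Fin k₂, ∑ y₂ : Fin k₂',
      ∑ u : Fin k, ∑ w : Fin k, ∑ v : Fin k', ∑ z : Fin k',
      ∑ a : Fin m, ∑ a₁ : Fin m, ∑ a' : Fin m', ∑ a₁' : Fin m',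
        σ (u, v) (w, z) * ρ (a, a') (a₁, a₁') *
          ΦA (Matrix.single (u, a) (w, a₁) 1) (b, x₂) (c, x₂) *
          ΦB (Matrix.single (v, a') (z, a₁') 1) (b', y₂) (c', y₂)) :
    (∃ h : Matrix (Fin m) (Fin m) ℂ →ₗ[ℂ] Matrix (Fin n) (Fin n) ℂ,
      ∀ ρ, ptrace₂ (Φ ρ) = h (ptrace₂ ρ)) ∧
    (∃ h' : Matrix (Fin m') (Fin m') ℂ →ₗ[ℂ] Matrix (Fin n') (Fin n') ℂ,
      ∀ ρ, ptrace₁ (Φ ρ) = h' (ptrace₁ ρ)) := by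
    classical
  constructor
  · refine ⟨⟨⟨fun X => Matrix.of fun b c =>
        ∑ x₂ : Fin k₂, ∑ u : Fin k, ∑ w : Fin k, ∑ a : Fin m, ∑ a₁ : Fin m, ∑ v : Fin k',
          σ (u, v) (w, v) * X a a₁ *
            ΦA (Matrix.single (u, a) (w, a₁) 1) (b, x₂) (c, x₂), ?_⟩, ?_⟩, ?_⟩
    · intro X Y
      ext b c
      simp [Matrix.add_apply, mul_add, add_mul, Finset.sum_add_distrib]
    · intro r X
      ext b c
      simp only [Matrix.smul_apply, smul_eq_mul, Finset.mul_sum, Matrix.of_apply,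
        RingHom.id_apply]
      refine Finset.sum_congr rfl fun _ _ => Finset.sum_congr rfl fun _ _ =>
        Finset.sum_congr rfl fun _ _ => Finset.sum_congr rfl fun _ _ =>
        Finset.sum_congr rfl fun _ _ => Finset.sum_congr rfl fun _ _ => by ring
    · intro ρ
      have key : ∀ (v : Fin k') (a' : Fin m') (z : Fin k') (a₁' : Fin m'),
          (∑ b' : Fin n', ∑ y₂ : Fin k₂',
            ΦB (Matrix.single (v, a') (z, a₁') 1) (b', y₂) (b', y₂))
            = (if v = z then (1:ℂ) else 0) * (if a' = a₁' then 1 else 0) := by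
        intro v a' z a₁'
        have h1 := hB (Matrix.single (v, a') (z, a₁') 1)
        rw [trace_std] at h1
        rw [Matrix.trace, Fintype.sum_prod_type] at h1
        simp only [Matrix.diag_apply] at h1
        rw [h1]
        by_cases h2 : v = z <;> by_cases h3 : a' = a₁' <;> simp [h2, h3, Prod.ext_iff]
      ext b c
      calc ptrace₂ (Φ ρ) b c
          = ∑ p : Fin n' × Fin k₂ × Fin k₂' × Fin k × Fin k × Fin k' × Fin k' ×
                Fin m × Fin m × Fin m' × Fin m',
              (fun (q : Fin n' × Fin k₂ × Fin k₂' × Fin k × Fin k × Fin k' × Fin k' ×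
                Fin m × Fin m × Fin m' × Fin m') =>
                match q with
                | (b', x₂, y₂, u, w, v, z, a, a₁, a', a₁') =>
                  σ (u, v) (w, z) * ρ (a, a') (a₁, a₁') *
                    ΦA (Matrix.single (u, a) (w, a₁) 1) (b, x₂) (c, x₂) *
                    ΦB (Matrix.single (v, a') (z, a₁') 1) (b', y₂) (b', y₂)) p := by
            simp only [ptrace₂, Matrix.of_apply]
            simp only [hΦ]
            simp only [Fintype.sum_prod_type]
        _ = ∑ q : Fin k₂ × Fin k × Fin k × Fin m × Fin m × Fin k' × Fin m' × Fin k' ×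
                Fin m' × Fin n' × Fin k₂',
              (fun (q : Fin k₂ × Fin k × Fin k × Fin m × Fin m × Fin k' × Fin m' × Fin k' ×
                Fin m' × Fin n' × Fin k₂') =>
                match q with
                | (x₂, u, w, a, a₁, v, a', z, a₁', b', y₂) =>
                  σ (u, v) (w, z) * ρ (a, a') (a₁, a₁') *
                    ΦA (Matrix.single (u, a) (w, a₁) 1) (b, x₂) (c, x₂) *
                    ΦB (Matrix.single (v, a') (z, a₁') 1) (b', y₂) (b', y₂)) q := by
            refine (Fintype.sum_equiv
              ⟨fun (x₂, u, w, a, a₁, v, a', z, a₁', b', y₂) =>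
                  (b', x₂, y₂, u, w, v, z, a, a₁, a', a₁'),
               fun (b', x₂, y₂, u, w, v, z, a, a₁, a', a₁') =>
                  (x₂, u, w, a, a₁, v, a', z, a₁', b', y₂),
               by rintro ⟨x₂, u, w, a, a₁, v, a', z, a₁', b', y₂⟩; rfl,
               by rintro ⟨b', x₂, y₂, u, w, v, z, a, a₁, a', a₁'⟩; rfl⟩
              _ _ (fun q => ?_)).symm
            rcases q with ⟨x₂, u, w, a, a₁, v, a', z, a₁', b', y₂⟩
            rfl
        _ = _ := by
            simp only [Fintype.sum_prod_type, LinearMap.coe_mk, AddHom.coe_mk,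
              Matrix.of_apply, ptrace₂]
            simp only [← Finset.mul_sum]
            simp only [key]
            simp only [Finset.mul_sum, Finset.sum_mul]
            simp only [mul_ite, ite_mul, mul_one, mul_zero, zero_mul, Finset.sum_ite_eq,
              Finset.mem_univ, if_true]
  · refine ⟨⟨⟨fun X => Matrix.of fun b' c' =>
        ∑ y₂ : Fin k₂', ∑ v : Fin k', ∑ z : Fin k', ∑ a' : Fin m', ∑ a₁' : Fin m', ∑ u : Fin k,
          σ (u, v) (u, z) * X a' a₁' *
            ΦB (Matrix.single (v, a') (z, a₁') 1) (b', y₂) (c', y₂), ?_⟩, ?_⟩, ?_⟩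
    · intro X Y
      ext b' c'
      simp [Matrix.add_apply, mul_add, add_mul, Finset.sum_add_distrib]
    · intro r X
      ext b' c'
      simp only [Matrix.smul_apply, smul_eq_mul, Finset.mul_sum, Matrix.of_apply,
        RingHom.id_apply]
      refine Finset.sum_congr rfl fun _ _ => Finset.sum_congr rfl fun _ _ =>
        Finset.sum_congr rfl fun _ _ => Finset.sum_congr rfl fun _ _ =>
        Finset.sum_congr rfl fun _ _ => Finset.sum_congr rfl fun _ _ => by ring
    · intro ρ
      have key : ∀ (u : Fin k) (a : Fin m) (w : Fin k) (a₁ : Fin m),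
          (∑ b : Fin n, ∑ x₂ : Fin k₂,
            ΦA (Matrix.single (u, a) (w, a₁) 1) (b, x₂) (b, x₂))
            = (if u = w then (1:ℂ) else 0) * (if a = a₁ then 1 else 0) := by
        intro u a w a₁
        have h1 := hA (Matrix.single (u, a) (w, a₁) 1)
        rw [trace_std] at h1
        rw [Matrix.trace, Fintype.sum_prod_type] at h1
        simp only [Matrix.diag_apply] at h1
        rw [h1]
        by_cases h2 : u = w <;> by_cases h3 : a = a₁ <;> simp [h2, h3, Prod.ext_iff]
      ext b' c'
      calc ptrace₁ (Φ ρ) b' c'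
          = ∑ p : Fin n × Fin k₂ × Fin k₂' × Fin k × Fin k × Fin k' × Fin k' ×
                Fin m × Fin m × Fin m' × Fin m',
              (fun (q : Fin n × Fin k₂ × Fin k₂' × Fin k × Fin k × Fin k' × Fin k' ×
                Fin m × Fin m × Fin m' × Fin m') =>
                match q with
                | (b, x₂, y₂, u, w, v, z, a, a₁, a', a₁') =>
                  σ (u, v) (w, z) * ρ (a, a') (a₁, a₁') *
                    ΦA (Matrix.single (u, a) (w, a₁) 1) (b, x₂) (b, x₂) *
                    ΦB (Matrix.single (v, a') (z, a₁') 1) (b', y₂) (c', y₂)) p := by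
            simp only [ptrace₁, Matrix.of_apply]
            simp only [hΦ]
            simp only [Fintype.sum_prod_type]
        _ = ∑ q : Fin k₂' × Fin k' × Fin k' × Fin m' × Fin m' × Fin k × Fin m × Fin k ×
                Fin m × Fin n × Fin k₂,
              (fun (q : Fin k₂' × Fin k' × Fin k' × Fin m' × Fin m' × Fin k × Fin m × Fin k ×
                Fin m × Fin n × Fin k₂) =>
                match q with
                | (y₂, v, z, a', a₁', u, a, w, a₁, b, x₂) =>
                  σ (u, v) (w, z) * ρ (a, a') (a₁, a₁') *
                    ΦB (Matrix.single (v, a') (z, a₁') 1) (b', y₂) (c', y₂) *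
                    ΦA (Matrix.single (u, a) (w, a₁) 1) (b, x₂) (b, x₂)) q := by
            refine (Fintype.sum_equiv
              ⟨fun (y₂, v, z, a', a₁', u, a, w, a₁, b, x₂) =>
                  (b, x₂, y₂, u, w, v, z, a, a₁, a', a₁'),
               fun (b, x₂, y₂, u, w, v, z, a, a₁, a', a₁') =>
                  (y₂, v, z, a', a₁', u, a, w, a₁, b, x₂),
               by rintro ⟨y₂, v, z, a', a₁', u, a, w, a₁, b, x₂⟩; rfl,
               by rintro ⟨b, x₂, y₂, u, w, v, z, a, a₁, a', a₁'⟩; rfl⟩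
              _ _ (fun q => ?_)).symm
            rcases q with ⟨y₂, v, z, a', a₁', u, a, w, a₁, b, x₂⟩
            exact mul_right_comm _ _ _
        _ = _ := by
            simp only [Fintype.sum_prod_type, LinearMap.coe_mk, AddHom.coe_mk,
              Matrix.of_apply, ptrace₁]
            simp only [← Finset.mul_sum]
            simp only [key]
            simp only [Finset.mul_sum, Finset.sum_mul]
            simp only [mul_ite, ite_mul, mul_one, mul_zero, zero_mul, Finset.sum_ite_eq,
              Finset.mem_univ, if_true]
end

section
/- In a symmetric monoidal category with discarding d_A : A → I and d_I = id_I, suppose End(I) = {id_I} (axiom (!)). If the process f ⊗ id_{A'} : A ⊗ A' → B ⊗ A' is non-signalling for every f : A → B and every object A', then taking A' = I shows d_B ∘ f = d_A; conversely if d_B ∘ f = d_A for all f then f ⊗ id_{A'} is non-signalling for all f, A'. Hence under (!), 'all trivially-extended single-party processes are non-signalling' is equivalent to terminality. -/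
open CategoryTheory MonoidalCategory

/-- Under axiom (!) (the only endomorphism of the unit is the identity), all
trivially-extended single-party processes `f ⊗ 𝟙 A'` being non-signalling is
equivalent to terminality of the theory. -/
theorem nonsignalling_iff_terminality
    {C : Type*} [Category C] [MonoidalCategory C] [SymmetricCategory C]
    (d : ∀ A : C, A ⟶ 𝟙_ C) (hdI : d (𝟙_ C) = 𝟙 (𝟙_ C))
    (bang : ∀ e : 𝟙_ C ⟶ 𝟙_ C, e = 𝟙 (𝟙_ C)) :
    (∀ (A B A' : C) (f : A ⟶ B), NonSignalling d (f ⊗ₘ 𝟙 A')) ↔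
      (∀ (A B : C) (f : A ⟶ B), f ≫ d B = d A) := by
  constructor
  · intro H A B f
    obtain ⟨⟨h, hh⟩, -⟩ := H A B (𝟙_ C) f
    rw [bang h, Category.comp_id] at hh
    have key : (ρ_ A).hom ≫ (f ≫ d B) = (ρ_ A).hom ≫ d A := by
      have e1 : ((f ≫ d B) ⊗ₘ 𝟙 (𝟙_ C)) ≫ (λ_ (𝟙_ C)).hom =
          (d A ⊗ₘ 𝟙 (𝟙_ C)) ≫ (λ_ (𝟙_ C)).hom := by
        rw [← hh, ← Category.assoc, tensorHom_comp_tensorHom, Category.comp_id]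
      rw [unitors_equal] at e1
      simpa [rightUnitor_naturality] using e1
    exact (Iso.cancel_iso_hom_left (ρ_ A) _ _).mp key
  · intro H A B A' f
    constructor
    · refine ⟨𝟙 A', ?_⟩
      rw [← Category.assoc, tensorHom_comp_tensorHom, Category.comp_id, H, Category.comp_id]
    · refine ⟨f, ?_⟩
      rw [← Category.assoc, tensorHom_comp_tensorHom, Category.comp_id, Category.id_comp,
        show f ⊗ₘ d A' = (𝟙 A ⊗ₘ d A') ≫ (f ⊗ₘ 𝟙 (𝟙_ C)) by
          rw [tensorHom_comp_tensorHom]; simp,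
        Category.assoc, tensorHom_id, rightUnitor_naturality]
end
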